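/- Let G = M ⋊ C where M is an abelian normal subgroup, C = ⟨a⟩ cyclic, and regard M as a module over R = Z[C]/ann(M). Let ν be the image in R of the norm element of Z[C] (0 if C is infinite, 1 + a + ... + a^{|C|-1} otherwise). A tuple (m_1,...,m_{n-1}, m·a) with m_i, m ∈ M generates the group G if and only if (m_1,...,m_{n-1}, ν·m) generates M as an R-module. -/

import Mathlib

/-- The action of `C` on `M` by additive automorphisms, packaged as a homomorphism
`C →* MulAut (Multiplicative M)`, used to form the semidirect product `M ⋊ C`. -/
def sdAction (C M : Type*) [Group C] [AddCommGroup M] [DistribMulAction C M] :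
    C →* MulAut (Multiplicative M) where
  toFun c := AddEquiv.toMultiplicative (DistribMulAction.toAddAut C M c)
  map_one' := by ext x; simp
  map_mul' c c' := by ext x; simp [mul_smul]

section Aux
variable {C M : Type*} [Group C] [AddCommGroup M] [DistribMulAction C M]

lemma sdAction_apply (c : C) (x : Multiplicative M) :
    sdAction C M c x = Multiplicative.ofAdd (c • x.toAdd) := rfl

lemma sd_mk_mul (x y : M) (c d : C) :
    (⟨Multiplicative.ofAdd x, c⟩ * ⟨Multiplicative.ofAdd y, d⟩ :
      Multiplicative M ⋊[sdAction C M] C) = ⟨Multiplicative.ofAdd (x + c • y), c * d⟩ := rfl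

end Aux

/-- Lemma 3.1: in `G = M ⋊ C` with `C = ⟨a⟩` cyclic and `M` abelian, the tuple
`(m_1, …, m_n, m'·a)` generates the group `G` if and only if
`(m_1, …, m_n, ν·m')` generates `M` as an `R = ℤ[C]/ann(M)`-module, where `ν`
is the image of the norm element (here `ν·m' = ∑ᶠ c : C, c • m'`, and `R`-module
generation is expressed as the `ℤ`-span of the `C`-orbits). -/
theorem stmt_9 {C M : Type*} [Group C] [AddCommGroup M] [DistribMulAction C M]
    (a : C) (hC : ∀ c : C, c ∈ Subgroup.zpowers a)
    (n : ℕ) (m : Fin n → M) (m' : M) :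
    Subgroup.closure
        ((Set.range fun i : Fin n =>
            (⟨Multiplicative.ofAdd (m i), 1⟩ : Multiplicative M ⋊[sdAction C M] C)) ∪
          {(⟨Multiplicative.ofAdd m', a⟩ : Multiplicative M ⋊[sdAction C M] C)}) = ⊤ ↔
      Submodule.span ℤ
        ((Set.range fun p : C × Fin n => p.1 • m p.2) ∪
          Set.range fun c : C => c • (∑ᶠ c' : C, c' • m')) = ⊤ := by
  classical
  set g : Multiplicative M ⋊[sdAction C M] C := ⟨Multiplicative.ofAdd m', a⟩ with hg
  set σ : ℤ → M := fun k => Multiplicative.toAdd ((g ^ k).left) with hσdef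
  set N : Submodule ℤ M := Submodule.span ℤ
      ((Set.range fun p : C × Fin n => p.1 • m p.2) ∪
        Set.range fun c : C => c • (∑ᶠ c' : C, c' • m')) with hNdef
  have hgr : ∀ k : ℤ, (g ^ k).right = a ^ k := fun k => by
    rw [← SemidirectProduct.rightHom_eq_right]
    simp only [map_zpow]
    rfl
  have hσ0 : σ 0 = 0 := by simp [hσdef]
  have hσ1 : σ 1 = m' := by simp [hσdef, hg]
  have hσadd : ∀ k l : ℤ, σ (k + l) = σ k + a ^ k • σ l := by
    intro k l
    simp only [hσdef]
    rw [zpow_add, SemidirectProduct.mul_left, toAdd_mul, sdAction_apply, toAdd_ofAdd, hgr]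
  -- N is stable under the C-action
  have hNs : ∀ (c : C) {x : M}, x ∈ N → c • x ∈ N := by
    intro c x hx
    induction hx using Submodule.span_induction with
    | mem y hy =>
      apply Submodule.subset_span
      rcases hy with ⟨⟨d, i⟩, rfl⟩ | ⟨d, rfl⟩
      · exact Or.inl ⟨(c * d, i), by simp only [mul_smul]⟩
      · exact Or.inr ⟨c * d, by simp only [mul_smul]⟩
    | zero => simpa using N.zero_mem
    | add y z _ _ hy hz => rw [smul_add]; exact N.add_mem hy hz
    | smul r y _ hy => rw [smul_comm]; exact N.smul_mem r hy
  have hmem_ν : (∑ᶠ c' : C, c' • m') ∈ N :=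
    Submodule.subset_span (Or.inr ⟨1, one_smul _ _⟩)
  have hmem_m : ∀ i, m i ∈ N := fun i =>
    Submodule.subset_span (Or.inl ⟨(1, i), one_smul _ _⟩)
  have hσNadd : ∀ k l : ℤ, σ k ∈ N → σ l ∈ N → σ (k + l) ∈ N := by
    intro k l hk hl
    rw [hσadd]
    exact N.add_mem hk (hNs _ hl)
  have hσNneg : ∀ k : ℤ, σ k ∈ N → σ (-k) ∈ N := by
    intro k hk
    have h1 : σ k + a ^ k • σ (-k) = 0 := by
      rw [← hσadd, add_neg_cancel, hσ0]
    have h2 : σ (-k) = (a ^ k)⁻¹ • (-σ k) := by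
      have h3 : a ^ k • σ (-k) = -σ k := by
        rw [add_comm] at h1; exact eq_neg_of_add_eq_zero_left h1
      rw [← h3, inv_smul_smul]
    rw [h2]
    exact hNs _ (N.neg_mem hk)
  -- the dichotomy
  have hdicho : (∀ k : ℤ, a ^ k = 1 → σ k ∈ N) ∧
      ∃ k : ℤ, a ^ k = 1 ∧ σ k = ∑ᶠ c' : C, c' • m' := by
    by_cases hfin : Finite C
    · haveI := hfin
      have hd : 0 < orderOf a := orderOf_pos a
      have hσnat : ∀ j : ℕ, σ j = ∑ i ∈ Finset.range j, a ^ i • m' := by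
        intro j
        induction j with
        | zero => simpa using hσ0
        | succ j ih =>
          have h := hσadd j 1
          rw [hσ1] at h
          push_cast
          rw [h, Finset.sum_range_succ, ih, zpow_natCast]
      have hfinsum : (∑ᶠ c' : C, c' • m') = σ (orderOf a) := by
        letI := Fintype.ofFinite C
        rw [finsum_eq_sum_of_fintype, hσnat]
        rw [← Equiv.sum_comp ((finEquivZPowers (isOfFinOrder_of_finite a)).trans
            (Equiv.subtypeUnivEquiv fun x => hC x)) (fun c : C => c • m'),
          ← Fin.sum_univ_eq_sum_range]
        exact Finset.sum_congr rfl fun i _ => rfl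
      have hbase : σ (orderOf a) ∈ N := by rw [← hfinsum]; exact hmem_ν
      constructor
      · intro k hk
        obtain ⟨q, rfl⟩ := orderOf_dvd_iff_zpow_eq_one.mpr hk
        clear hk
        induction q using Int.induction_on with
        | zero => simpa [hσ0] using N.zero_mem
        | succ q ih =>
          rw [mul_add, mul_one]
          exact hσNadd _ _ ih hbase
        | pred q ih =>
          rw [mul_sub, mul_one, sub_eq_add_neg]
          exact hσNadd _ _ ih (hσNneg _ hbase)
      · exact ⟨orderOf a, by rw [zpow_natCast, pow_orderOf_eq_one], hfinsum.symm⟩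
    · have hord : ¬ IsOfFinOrder a := by
        intro h
        apply hfin
        have h1 : (Subgroup.zpowers a : Set C).Finite := h.finite_zpowers
        have h2 : (Subgroup.zpowers a : Set C) = Set.univ := by
          ext x; simp [hC x]
        rw [h2, Set.finite_univ_iff] at h1
        exact h1
      have hinj := injective_zpow_iff_not_isOfFinOrder.mpr hord
      haveI : Infinite C := not_finite_iff_infinite.mp hfin
      have hν0 : (∑ᶠ c' : C, c' • m') = 0 := by
        by_cases hm : m' = 0
        · simp [hm]
        · apply finsum_of_infinite_support
          have hsupp : (Function.support fun c : C => c • m') = Set.univ := by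
            ext c
            simp [Function.mem_support, smul_ne_zero_iff_ne, hm]
          rw [hsupp]
          exact Set.infinite_univ
      refine ⟨fun k hk => ?_, ⟨0, by simp, by simp [hσ0, hν0]⟩⟩
      have hk0 : k = 0 := hinj (by simpa using hk)
      simpa [hk0, hσ0] using N.zero_mem
  obtain ⟨hkey, k₀, hk₀, hσk₀⟩ := hdicho
  constructor
  · -- group generation → module generation
    intro hH
    set K : Subgroup (Multiplicative M ⋊[sdAction C M] C) :=
      { carrier := {p | ∃ k : ℤ, p.right = a ^ k ∧ Multiplicative.toAdd p.left - σ k ∈ N}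
        one_mem' := ⟨0, by simp, by simpa [hσ0] using N.zero_mem⟩
        mul_mem' := by
          rintro p q ⟨k, hk, hpk⟩ ⟨l, hl, hql⟩
          refine ⟨k + l, ?_, ?_⟩
          · rw [SemidirectProduct.mul_right, hk, hl, zpow_add]
          · rw [SemidirectProduct.mul_left, toAdd_mul, sdAction_apply, toAdd_ofAdd, hσadd, hk]
            have heq : Multiplicative.toAdd p.left + a ^ k • Multiplicative.toAdd q.left -
                (σ k + a ^ k • σ l) =
                (Multiplicative.toAdd p.left - σ k) +
                  a ^ k • (Multiplicative.toAdd q.left - σ l) := by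
              rw [smul_sub]; abel
            rw [heq]
            exact N.add_mem hpk (hNs _ hql)
        inv_mem' := by
          rintro p ⟨k, hk, hpk⟩
          refine ⟨-k, ?_, ?_⟩
          · rw [SemidirectProduct.inv_right, hk, zpow_neg]
          · rw [SemidirectProduct.inv_left, sdAction_apply, toAdd_ofAdd, hk]
            have hσneg : σ (-k) = (a ^ k)⁻¹ • (-σ k) := by
              have h1 : σ k + a ^ k • σ (-k) = 0 := by
                rw [← hσadd, add_neg_cancel, hσ0]
              have h2 : a ^ k • σ (-k) = -σ k := by
                rw [add_comm] at h1; exact eq_neg_of_add_eq_zero_left h1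
              rw [← h2, inv_smul_smul]
            rw [hσneg, toAdd_inv]
            have heq : (a ^ k)⁻¹ • (-Multiplicative.toAdd p.left) - (a ^ k)⁻¹ • (-σ k) =
                (a ^ k)⁻¹ • (-(Multiplicative.toAdd p.left - σ k)) := by
              rw [← smul_sub]; congr 1; abel
            rw [heq]
            exact hNs _ (N.neg_mem hpk) }
    have hle : Subgroup.closure
        ((Set.range fun i : Fin n =>
            (⟨Multiplicative.ofAdd (m i), 1⟩ : Multiplicative M ⋊[sdAction C M] C)) ∪
          {g}) ≤ K := by
      apply Subgroup.closure_le _ |>.mpr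
      rintro p (⟨i, rfl⟩ | hp)
      · exact ⟨0, by simp, by simpa [hσ0] using hmem_m i⟩
      · rw [Set.mem_singleton_iff] at hp
        subst hp
        exact ⟨1, by simp [hg], by simp [hσ1, hg]⟩
    rw [hH] at hle
    rw [eq_top_iff]
    rintro x -
    obtain ⟨k, hk, hxk⟩ := hle (Subgroup.mem_top (⟨Multiplicative.ofAdd x, 1⟩ :
      Multiplicative M ⋊[sdAction C M] C))
    have hσk : σ k ∈ N := hkey k (by rw [← hk])
    have : x = (Multiplicative.toAdd (Multiplicative.ofAdd x) - σ k) + σ k := by simp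
    rw [this]
    exact N.add_mem hxk hσk
  · -- module generation → group generation
    intro hNt
    set H := Subgroup.closure
        ((Set.range fun i : Fin n =>
            (⟨Multiplicative.ofAdd (m i), 1⟩ : Multiplicative M ⋊[sdAction C M] C)) ∪
          {g}) with hHdef
    have hgH : g ∈ H := Subgroup.subset_closure (Or.inr rfl)
    have hmH : ∀ i, (⟨Multiplicative.ofAdd (m i), 1⟩ :
        Multiplicative M ⋊[sdAction C M] C) ∈ H := fun i =>
      Subgroup.subset_closure (Or.inl ⟨i, rfl⟩)
    have hconj : ∀ x : M, g * (⟨Multiplicative.ofAdd x, 1⟩ :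
        Multiplicative M ⋊[sdAction C M] C) * g⁻¹ =
        ⟨Multiplicative.ofAdd (a • x), 1⟩ := by
      intro x
      have h1 : g * (⟨Multiplicative.ofAdd x, 1⟩ :
          Multiplicative M ⋊[sdAction C M] C) =
          ⟨Multiplicative.ofAdd (a • x), 1⟩ * g := by
        rw [hg, sd_mk_mul, sd_mk_mul, one_smul, mul_one, one_mul, add_comm]
      rw [h1, mul_inv_cancel_right]
    have hstep : ∀ x : M, (⟨Multiplicative.ofAdd x, 1⟩ :
        Multiplicative M ⋊[sdAction C M] C) ∈ H →
        (⟨Multiplicative.ofAdd (a • x), 1⟩ :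
          Multiplicative M ⋊[sdAction C M] C) ∈ H := by
      intro x hx
      rw [← hconj]
      exact mul_mem (mul_mem hgH hx) (inv_mem hgH)
    have hstep' : ∀ x : M, (⟨Multiplicative.ofAdd x, 1⟩ :
        Multiplicative M ⋊[sdAction C M] C) ∈ H →
        (⟨Multiplicative.ofAdd (a⁻¹ • x), 1⟩ :
          Multiplicative M ⋊[sdAction C M] C) ∈ H := by
      intro x hx
      have h1 : (⟨Multiplicative.ofAdd (a⁻¹ • x), 1⟩ :
          Multiplicative M ⋊[sdAction C M] C) =
          g⁻¹ * (⟨Multiplicative.ofAdd x, 1⟩ :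
            Multiplicative M ⋊[sdAction C M] C) * g := by
        have h2 := hconj (a⁻¹ • x)
        rw [smul_inv_smul] at h2
        rw [← h2]
        group
      rw [h1]
      exact mul_mem (mul_mem (inv_mem hgH) hx) hgH
    have hzpow : ∀ (k : ℤ) (x : M), (⟨Multiplicative.ofAdd x, 1⟩ :
        Multiplicative M ⋊[sdAction C M] C) ∈ H →
        (⟨Multiplicative.ofAdd (a ^ k • x), 1⟩ :
          Multiplicative M ⋊[sdAction C M] C) ∈ H := by
      intro k
      induction k using Int.induction_on with
      | zero => intro x hx; simpa using hx
      | succ k ih =>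
        intro x hx
        have h1 := hstep _ (ih x hx)
        have hexp : a * a ^ (k : ℤ) = a ^ ((k : ℤ) + 1) := by
          group
        rw [← mul_smul, hexp] at h1
        exact h1
      | pred k ih =>
        intro x hx
        have h1 := hstep' _ (ih x hx)
        have hexp : a⁻¹ * a ^ (-(k : ℤ)) = a ^ (-(k : ℤ) - 1) := by
          group
        rw [← mul_smul, hexp] at h1
        exact h1
    have hsmulH : ∀ (c : C) (x : M), (⟨Multiplicative.ofAdd x, 1⟩ :
        Multiplicative M ⋊[sdAction C M] C) ∈ H →
        (⟨Multiplicative.ofAdd (c • x), 1⟩ :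
          Multiplicative M ⋊[sdAction C M] C) ∈ H := by
      intro c x hx
      obtain ⟨k, hk⟩ := Subgroup.mem_zpowers_iff.mp (hC c)
      rw [← hk]
      exact hzpow k x hx
    have hνH : (⟨Multiplicative.ofAdd (∑ᶠ c' : C, c' • m'), 1⟩ :
        Multiplicative M ⋊[sdAction C M] C) ∈ H := by
      have h1 : (⟨Multiplicative.ofAdd (σ k₀), 1⟩ :
          Multiplicative M ⋊[sdAction C M] C) = g ^ k₀ := by
        refine SemidirectProduct.ext ?_ ?_
        · simp [hσdef]
        · rw [hgr, hk₀]
      rw [← hσk₀, h1]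
      exact zpow_mem hgH k₀
    have hT : ∀ x : M, x ∈ N → (⟨Multiplicative.ofAdd x, 1⟩ :
        Multiplicative M ⋊[sdAction C M] C) ∈ H := by
      intro x hx
      induction hx using Submodule.span_induction with
      | mem y hy =>
        rcases hy with ⟨⟨c, i⟩, rfl⟩ | ⟨c, rfl⟩
        · exact hsmulH c (m i) (hmH i)
        · exact hsmulH c _ hνH
      | zero => exact one_mem H
      | add y z _ _ hy hz =>
        have := mul_mem hy hz
        rw [sd_mk_mul, one_smul, mul_one] at this
        exact this
      | smul r y _ hy =>
        have h1 : (⟨Multiplicative.ofAdd (r • y), 1⟩ :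
            Multiplicative M ⋊[sdAction C M] C) =
            (⟨Multiplicative.ofAdd y, 1⟩ :
              Multiplicative M ⋊[sdAction C M] C) ^ r := by
          rw [ofAdd_zsmul]
          show SemidirectProduct.inl (Multiplicative.ofAdd y ^ r) = _
          rw [map_zpow]
          rfl
        rw [h1]
        exact zpow_mem hy r
    rw [eq_top_iff]
    rintro p -
    obtain ⟨k, hk⟩ := Subgroup.mem_zpowers_iff.mp (hC p.right)
    have h2 : p = (⟨Multiplicative.ofAdd (Multiplicative.toAdd p.left - σ k), 1⟩ :
        Multiplicative M ⋊[sdAction C M] C) * g ^ k := by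
      refine SemidirectProduct.ext ?_ ?_
      · rw [SemidirectProduct.mul_left, map_one, MulAut.one_apply,
          ← ofAdd_toAdd ((g ^ k).left), ← ofAdd_add]
        have heq : Multiplicative.toAdd p.left - σ k + Multiplicative.toAdd ((g ^ k).left) =
            Multiplicative.toAdd p.left := by
          show Multiplicative.toAdd p.left - σ k + σ k = Multiplicative.toAdd p.left
          abel
        rw [heq, ofAdd_toAdd]
      · rw [SemidirectProduct.mul_right, hgr, one_mul, hk]
    rw [h2]
    exact mul_mem (hT _ (by rw [hNt]; trivial)) (zpow_mem hgH k)
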